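/- Let T:V→𝔤 be a relative Rota-Baxter operator on a Lie-Yamaguti algebra 𝔤 with respect to a representation (V;ρ,μ). Then the brackets [u,v]_T := ρ(Tu)v − ρ(Tv)u and ⟦u,v,w⟧_T := D(Tu,Tv)w + μ(Tv,Tw)u − μ(Tu,Tw)v define a Lie-Yamaguti algebra structure on V, and T is a homomorphism of Lie-Yamaguti algebras from (V,[·,·]_T,⟦·,·,·⟧_T) to (𝔤,[·,·],⟦·,·,·⟧). -/

import Mathlib

open scoped BigOperators

variable (K : Type*) [Field K]

section Defs
variable {g V : Type*} [AddCommGroup g] [Module K g] [AddCommGroup V] [Module K V]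

/-- Bilinearity of a two-argument map. -/
def IsBilin (f : g → g → V) : Prop :=
  (∀ a b c, f (a + b) c = f a c + f b c) ∧
  (∀ (s : K) a c, f (s • a) c = s • f a c) ∧
  (∀ a b c, f a (b + c) = f a b + f a c) ∧
  (∀ (s : K) a b, f a (s • b) = s • f a b)

/-- Trilinearity of a three-argument map. -/
def IsTrilin (f : g → g → g → V) : Prop :=
  (∀ a b c d, f (a + b) c d = f a c d + f b c d) ∧
  (∀ (s : K) a c d, f (s • a) c d = s • f a c d) ∧
  (∀ a b c d, f a (b + c) d = f a b d + f a c d) ∧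
  (∀ (s : K) a b d, f a (s • b) d = s • f a b d) ∧
  (∀ a b c d, f a b (c + d) = f a b c + f a b d) ∧
  (∀ (s : K) a b c, f a b (s • c) = s • f a b c)

/-- Linearity of a map. -/
def IsLin (f : g → V) : Prop :=
  (∀ a b, f (a + b) = f a + f b) ∧ (∀ (s : K) a, f (s • a) = s • f a)

/-- `(g, br, tr)` is a Lie-Yamaguti algebra. -/
def IsLY (br : g → g → g) (tr : g → g → g → g) : Prop :=
  IsBilin K br ∧ IsTrilin K tr ∧
  (∀ x y, br x y = - br y x) ∧
  (∀ x y z, tr x y z = - tr y x z) ∧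
  (∀ x y z, br (br x y) z + br (br y z) x + br (br z x) y
      + tr x y z + tr y z x + tr z x y = 0) ∧
  (∀ x y z w, tr (br x y) z w + tr (br y z) x w + tr (br z x) y w = 0) ∧
  (∀ x y z w, tr x y (br z w) = br (tr x y z) w + br z (tr x y w)) ∧
  (∀ x y z w t, tr x y (tr z w t) =
      tr (tr x y z) w t + tr z (tr x y w) t + tr z w (tr x y t))

/-- The operator `D(x,y) = μ(y,x) − μ(x,y) + [ρ(x),ρ(y)] − ρ([x,y])`. -/
def Dmap (br : g → g → g) (ρ : g → Module.End K V) (μ : g → g → Module.End K V)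
    (x y : g) : Module.End K V :=
  μ y x - μ x y + (ρ x * ρ y - ρ y * ρ x) - ρ (br x y)

/-- `(V; ρ, μ)` is a representation of the Lie-Yamaguti algebra `(g, br, tr)`. -/
def IsRep (br : g → g → g) (tr : g → g → g → g)
    (ρ : g → Module.End K V) (μ : g → g → Module.End K V) : Prop :=
  IsLin K ρ ∧ IsBilin K μ ∧
  (∀ x y z, μ (br x y) z - μ x z * ρ y + μ y z * ρ x = 0) ∧
  (∀ x y z, μ x (br y z) - ρ y * μ x z + ρ z * μ x y = 0) ∧
  (∀ x y z, ρ (tr x y z) = Dmap K br ρ μ x y * ρ z - ρ z * Dmap K br ρ μ x y) ∧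
  (∀ x y z w, μ z w * μ x y - μ y w * μ x z - μ x (tr y z w)
      + Dmap K br ρ μ y z * μ x w = 0) ∧
  (∀ x y z w, μ (tr x y z) w + μ z (tr x y w) =
      Dmap K br ρ μ x y * μ z w - μ z w * Dmap K br ρ μ x y)

/-- `T : V → g` is a relative Rota-Baxter operator. -/
def IsRRB (br : g → g → g) (tr : g → g → g → g)
    (ρ : g → Module.End K V) (μ : g → g → Module.End K V) (T : V →ₗ[K] g) : Prop :=
  (∀ u v, br (T u) (T v) = T (ρ (T u) v - ρ (T v) u)) ∧
  (∀ u v w, tr (T u) (T v) (T w) =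
      T (Dmap K br ρ μ (T u) (T v) w + μ (T v) (T w) u - μ (T u) (T w) v))

end Defs

section Nij
variable {h : Type*} [AddCommGroup h]

/-- `N` is a Nijenhuis operator on the Lie-Yamaguti algebra `(h, br, tr)`. -/
def IsNijenhuis (br : h → h → h) (tr : h → h → h → h) (N : h → h) : Prop :=
  (∀ x y, br (N x) (N y) = N (br (N x) y + br x (N y) - N (br x y))) ∧
  (∀ x y z, tr (N x) (N y) (N z) =
      N (tr (N x) (N y) z + tr (N x) y (N z) + tr x (N y) (N z)
        - N (tr (N x) y z) - N (tr x (N y) z) - N (tr x y (N z))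
        + N (N (tr x y z))))

end Nij

set_option maxHeartbeats 1600000 in
theorem stmt6 {g V : Type*} [AddCommGroup g] [Module K g] [AddCommGroup V] [Module K V]
    (br : g → g → g) (tr : g → g → g → g)
    (ρ : g → Module.End K V) (μ : g → g → Module.End K V)
    (hLY : IsLY K br tr) (hrep : IsRep K br tr ρ μ)
    (T : V →ₗ[K] g) (hT : IsRRB K br tr ρ μ T) :
    IsLY K (fun u v : V => ρ (T u) v - ρ (T v) u)
      (fun u v w : V => Dmap K br ρ μ (T u) (T v) w + μ (T v) (T w) u - μ (T u) (T w) v) ∧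
    (∀ u v : V, T (ρ (T u) v - ρ (T v) u) = br (T u) (T v)) ∧
    (∀ u v w : V,
      T (Dmap K br ρ μ (T u) (T v) w + μ (T v) (T w) u - μ (T u) (T w) v)
        = tr (T u) (T v) (T w)) := by
  obtain ⟨⟨hba1, hbs1, hba2, hbs2⟩, -, hsk2, -, hg1, -, hg3, -⟩ := hLY
  obtain ⟨⟨hρa, hρs⟩, ⟨hμa1, hμs1, hμa2, hμs2⟩, hR1, hR2, hR3, hR4, hR5⟩ := hrep
  obtain ⟨hT1, hT2⟩ := hT
  have hρneg : ∀ p : g, ρ (-p) = - ρ p := fun p => by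
    rw [← neg_one_smul K p, hρs, neg_one_smul]
  have hρ0 : ρ (0 : g) = 0 := by
    rw [← zero_smul K (0 : g), hρs, zero_smul]
  -- oriented operator-level rewrites
  have hR1' : ∀ x y z, μ (br x y) z = μ x z * ρ y - μ y z * ρ x := fun x y z => by
    linear_combination (norm := abel) hR1 x y z
  have hR2' : ∀ x y z, μ x (br y z) = ρ y * μ x z - ρ z * μ x y := fun x y z => by
    linear_combination (norm := abel) hR2 x y z
  have hR4' : ∀ x y z w, μ x (tr y z w)
      = μ z w * μ x y - μ y w * μ x z + Dmap K br ρ μ y z * μ x w := fun x y z w => by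
    linear_combination (norm := abel) -hR4 x y z w
  -- D(x,y) is skew
  have hDsk : ∀ x y, Dmap K br ρ μ x y = - Dmap K br ρ μ y x := fun x y => by
    rw [Dmap, Dmap, hsk2 x y, hρneg]; abel
  -- the key operator identity [D(x,y), D(z,w)] = D(tr x y z, w) + D(z, tr x y w)
  have hDD : ∀ x y z w, Dmap K br ρ μ x y * Dmap K br ρ μ z w
      - Dmap K br ρ μ z w * Dmap K br ρ μ x y
      = Dmap K br ρ μ (tr x y z) w + Dmap K br ρ μ z (tr x y w) := by
    intro x y z w
    have h5c : ρ (br (tr x y z) w) + ρ (br z (tr x y w))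
        = Dmap K br ρ μ x y * ρ (br z w) - ρ (br z w) * Dmap K br ρ μ x y := by
      rw [← hρa, ← hg3]; exact hR3 x y (br z w)
    have h5a := hR3 x y z
    have h5b := hR3 x y w
    have h7a := hR5 x y z w
    have h7b := hR5 x y w z
    set D1 := Dmap K br ρ μ x y with hD1
    rw [Dmap, Dmap, Dmap]
    linear_combination (norm := noncomm_ring) h7a - h7b - h5a * ρ w + ρ w * h5a
      - ρ z * h5b + h5b * ρ z + h5c
  refine ⟨⟨?_, ?_, ?_, ?_, ?_, ?_, ?_, ?_⟩,
    fun u v => (hT1 u v).symm, fun u v w => (hT2 u v w).symm⟩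
  · -- bilinearity of the induced bracket
    refine ⟨fun u v w => ?_, fun s u v => ?_, fun u v w => ?_, fun s u v => ?_⟩ <;>
      simp only [map_add, map_smul, hρa, hρs, LinearMap.add_apply, LinearMap.smul_apply,
        smul_sub] <;> module
  · -- trilinearity of the induced triple bracket
    refine ⟨fun u v w t => ?_, fun s u v t => ?_, fun u v w t => ?_, fun s u v t => ?_,
      fun u v w t => ?_, fun s u v w => ?_⟩ <;>
      simp only [Dmap, map_add, map_smul, hρa, hρs, hμa1, hμs1, hμa2, hμs2, hba1, hbs1,
        hba2, hbs2, LinearMap.add_apply, LinearMap.smul_apply, LinearMap.sub_apply,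
        Module.End.mul_apply, LinearMap.neg_apply, map_sub, smul_sub, smul_add] <;> module
  · -- skew-symmetry of the bracket
    intro u v; beta_reduce; abel
  · -- skew-symmetry of the triple bracket
    intro u v w
    beta_reduce
    rw [hDsk (T u) (T v), LinearMap.neg_apply]
    abel
  · -- (LY1)
    intro x y z
    simp only [← hT1, Dmap, map_sub, LinearMap.sub_apply, LinearMap.add_apply,
      Module.End.mul_apply]
    abel
  · -- (LY2)
    intro x y z w
    have h0 := congrArg (fun q => ρ q w) (hg1 (T x) (T y) (T z))
    simp only [hρa, hρ0, hR3, Dmap, LinearMap.add_apply, LinearMap.zero_apply,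
      LinearMap.sub_apply, Module.End.mul_apply, map_add, map_sub] at h0
    simp only [← hT1]
    simp only [Dmap, hR1', hR2', map_sub, LinearMap.sub_apply, LinearMap.add_apply,
      Module.End.mul_apply]
    linear_combination (norm := abel) -h0
  · -- (LY3)
    intro x y z w
    simp only [← hT1, ← hT2]
    simp only [hR2', hR3, Dmap, map_sub, map_add, LinearMap.sub_apply,
      LinearMap.add_apply, Module.End.mul_apply]
    abel
  · -- (LY4)
    intro x y z w t
    have h4b := DFunLike.congr_fun (hR4' (T y) (T z) (T w) (T t)) x
    have h4a := DFunLike.congr_fun (hR4' (T x) (T z) (T w) (T t)) y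
    have h5z := DFunLike.congr_fun (hR5 (T x) (T y) (T w) (T t)) z
    have h5w := DFunLike.congr_fun (hR5 (T x) (T y) (T z) (T t)) w
    have hDt := DFunLike.congr_fun (hDD (T x) (T y) (T z) (T w)) t
    simp only [LinearMap.add_apply, LinearMap.sub_apply, Module.End.mul_apply, map_add,
      map_sub] at h4b h4a h5z h5w hDt
    simp only [← hT2]
    simp only [LinearMap.add_apply, LinearMap.sub_apply, Module.End.mul_apply,
      map_add, map_sub]
    linear_combination (norm := abel) hDt + h4b - h4a - h5z + h5w
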